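/- arXiv:1904.04979 — 3 statements merged into one kernel-verified Lean document; each statement's English description precedes it below -/
import Mathlib

section
/- Let G be a finite group and L a finite G-lattice. For each H ≤ G let L_H be a nonempty sublattice of L such that: (1) L_{ᵍH} = {ᵍs : s ∈ L_H} for all g ∈ G; (2) ʰs = s for all h ∈ H and s ∈ L_H; (3) s ∧ sup L_K ∈ L_K for all K ≤ H and s ∈ L_H; (4) sup L_K ≤ sup L_H for all K ≤ H. Then the assignments M_L(H) = L_H (a monoid under meet), con_H^g(s) = ᵍs, and res_K^H(s) = s ∧ sup L_K define a monoid functor for G: each con_H^g and res_K^H is a monoid homomorphism, and they satisfy the axioms con_{ʳH}^g ∘ con_H^r = con_H^{gr}, con_H^h = id for h ∈ H, res_L^K ∘ res_K^H = res_L^H, res_H^H = id, and con_K^g ∘ res_K^H = res_{ᵍK}^{ᵍH} ∘ con_H^g. -/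
set_option linter.unusedSectionVars false
set_option linter.unusedVariables false

open scoped Classical

namespace LB
noncomputable section

variable {G : Type*} [Group G]

/-- The conjugate subgroup `ᵍK = gKg⁻¹`. -/
def conjS (g : G) (K : Subgroup G) : Subgroup G :=
  K.map ((MulAut.conj g).toMonoidHom)

theorem mem_conjS {g x : G} {K : Subgroup G} : x ∈ conjS g K ↔ g⁻¹ * x * g ∈ K := by
  unfold conjS
  rw [Subgroup.mem_map]
  constructor
  · rintro ⟨y, hy, rfl⟩
    have h2 : g⁻¹ * ((MulAut.conj g).toMonoidHom y) * g = y := by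
      simp only [MulEquiv.coe_toMonoidHom, MulAut.conj_apply]; group
    rw [h2]; exact hy
  · intro h
    refine ⟨g⁻¹ * x * g, h, ?_⟩
    simp only [MulEquiv.coe_toMonoidHom, MulAut.conj_apply]; group

theorem conjS_mono (g : G) {K K' : Subgroup G} (h : K ≤ K') : conjS g K ≤ conjS g K' :=
  Subgroup.map_mono h

theorem conjS_one (K : Subgroup G) : conjS 1 K = K := by
  ext x; simp [mem_conjS]

theorem conjS_mul (g r : G) (K : Subgroup G) : conjS g (conjS r K) = conjS (g * r) K := by
  ext x
  rw [mem_conjS, mem_conjS, mem_conjS,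
    show r⁻¹ * (g⁻¹ * x * g) * r = (g * r)⁻¹ * x * (g * r) by group]

/-- The Möbius function of a finite partial order. -/
def mob {α : Type*} [PartialOrder α] [Finite α] (a b : α) : ℤ :=
  letI : Fintype α := Fintype.ofFinite α
  letI : @DecidableRel α α (· < ·) := Classical.decRel _
  letI : LocallyFiniteOrder α := Fintype.toLocallyFiniteOrder
  IncidenceAlgebra.mu ℤ a b

/-- A family of nonempty sublattices `L_H ⊆ L` of a finite `G`-lattice `L`
(for `H ≤ G`) satisfying the conditions of Proposition 4.2 of the paper; the binary
relation of `L` is required to be invariant under `G` (field `smul_le`).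
The data `top K` is the greatest element `sup L_K` of the sublattice `L_K`. -/
structure SubLatticeFamily (G : Type*) [Group G] (L : Type*) [Lattice L] [MulAction G L] where
  smul_le : ∀ (g : G) (x y : L), x ≤ y → g • x ≤ g • y
  S : Subgroup G → Set L
  nonempty : ∀ K, (S K).Nonempty
  inf_mem : ∀ (K : Subgroup G) {a b : L}, a ∈ S K → b ∈ S K → a ⊓ b ∈ S K
  sup_mem : ∀ (K : Subgroup G) {a b : L}, a ∈ S K → b ∈ S K → a ⊔ b ∈ S K
  top : Subgroup G → L
  top_mem : ∀ K, top K ∈ S K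
  le_top : ∀ K, ∀ a ∈ S K, a ≤ top K
  conj_eq : ∀ (g : G) (H : Subgroup G), S (conjS g H) = (g • ·) '' S H
  invariant : ∀ (H : Subgroup G), ∀ h ∈ H, ∀ s ∈ S H, h • s = s
  res_mem : ∀ {K H : Subgroup G}, K ≤ H → ∀ s ∈ S H, s ⊓ top K ∈ S K
  top_mono : ∀ {K H : Subgroup G}, K ≤ H → top K ≤ top H

variable {L : Type*} [Lattice L] [MulAction G L]

/-- The action of `G` on pairs `(K, s)`. -/
def dotL (g : G) (x : Subgroup G × L) : Subgroup G × L := (conjS g x.1, g • x.2)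

theorem dotL_one (x : Subgroup G × L) : dotL (1 : G) x = x := by
  simp [dotL, conjS_one]

theorem dotL_mul (g r : G) (x : Subgroup G × L) : dotL g (dotL r x) = dotL (g * r) x := by
  simp [dotL, conjS_mul, mul_smul]

variable (F : SubLatticeFamily G L)

/-- `(K,s) ∈ S(H, M_L)`: the pairs `(K,s)` with `K ≤ H` and `s ∈ L_K`. -/
def memS (H : Subgroup G) (x : Subgroup G × L) : Prop := x.1 ≤ H ∧ x.2 ∈ F.S x.1

/-- `N_H(K,s)`, the stabilizer in `H` of the pair `(K,s)`. -/
def NL (H : Subgroup G) (x : Subgroup G × L) : Subgroup G where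
  carrier := {g | g ∈ H ∧ dotL g x = x}
  one_mem' := ⟨H.one_mem, dotL_one x⟩
  mul_mem' := by
    rintro a b ⟨ha, da⟩ ⟨hb, db⟩
    exact ⟨H.mul_mem ha hb, by rw [← dotL_mul, db, da]⟩
  inv_mem' := by
    rintro a ⟨ha, da⟩
    refine ⟨H.inv_mem ha, ?_⟩
    conv_lhs => rw [← da]
    rw [dotL_mul, inv_mul_cancel, dotL_one]

/-- `|W_H(K,s)| = |N_H(K,s)/K|`. -/
def WCardL (H : Subgroup G) (x : Subgroup G × L) : ℕ := (x.1.subgroupOf (NL H x)).index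

/-- A complete set of representatives `R(H, M_L)` of the `H`-orbits of `S(H, M_L)`. -/
structure RepsL (F : SubLatticeFamily G L) (H : Subgroup G) where
  R : Set (Subgroup G × L)
  subset : ∀ x ∈ R, memS F H x
  complete : ∀ x, memS F H x → ∃! y, y ∈ R ∧ ∃ h ∈ H, dotL h x = y

variable {H : Subgroup G}

/-- The coordinate of a tuple indexed by a set of representatives at (the orbit of) an
arbitrary pair. -/
def coordAtL {A : Type*} [AddCommMonoid A] (ι : Set (Subgroup G × L)) (H : Subgroup G)
    (v : ↥ι → A) (y : Subgroup G × L) : A :=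
  ∑ᶠ (k : ↥ι) (_ : ∃ h ∈ H, dotL h y = ↑k), v k

/-- The class `[(H/K)_s]` expressed with respect to a family indexed by a set of
representatives: it picks out the member of the family lying in the orbit of `(K,s)`. -/
def clsSumL {A : Type*} [AddCommMonoid A] (ι : Set (Subgroup G × L)) (H : Subgroup G)
    (e : ↥ι → A) (y : Subgroup G × L) : A :=
  coordAtL ι H e y

/-- `#{hK ∈ H/K : U ≤ ʰK and t ≤ ʰs}` for `x = (K,s)`, `u = (U,t)`. -/
def invCountLe (H : Subgroup G) (x u : Subgroup G × L) : ℕ :=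
  Nat.card {q : ↥H ⧸ x.1.subgroupOf H //
    ∃ h : ↥H, QuotientGroup.mk h = q ∧ u.1 ≤ conjS (h : G) x.1 ∧ u.2 ≤ (h : G) • x.2}

/-- `#{hK ∈ H/K : U ≤ ʰK and t = res_U(ʰs) = ʰs ∧ sup L_U}` for `x = (K,s)`, `u = (U,t)`. -/
def invCountEq (F : SubLatticeFamily G L) (H : Subgroup G) (x u : Subgroup G × L) : ℕ :=
  Nat.card {q : ↥H ⧸ x.1.subgroupOf H //
    ∃ h : ↥H, QuotientGroup.mk h = q ∧ u.1 ≤ conjS (h : G) x.1 ∧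
      u.2 = ((h : G) • x.2) ⊓ F.top u.1}

/-- The mark homomorphism `φ_H` (in coordinates w.r.t. the basis `[(H/K)_s]`). -/
def phiL (R : RepsL F H) (f : ↥R.R → ℤ) : ↥R.R → ℤ :=
  fun u => ∑ᶠ k : ↥R.R, f k * (invCountEq F H k.1 u.1 : ℤ)

/-- The map `α̃_H` of Theorem 4.10 (in coordinates). -/
def alphaTL (R : RepsL F H) (f : ↥R.R → ℤ) : ↥R.R → ℤ :=
  fun u => ∑ᶠ k : ↥R.R, f k * (invCountLe H k.1 u.1 : ℤ)

/-- The subgroup `⟨r⟩U` generated by `r` and `U`. -/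
def cyc (r : G) (U : Subgroup G) : Subgroup G := Subgroup.closure {r} ⊔ U

/-- The least element of `{s ∈ L_P : s ≥ t}` (junk value if there is none). -/
def leastGE [Nonempty L] (P : Subgroup G) (t : L) : L :=
  Classical.epsilon fun s => (s ∈ F.S P ∧ t ≤ s) ∧ ∀ s', s' ∈ F.S P ∧ t ≤ s' → s ≤ s'

/-- The order of a Sylow `p`-subgroup of a group of order `n`; for `p = 0`
(representing `p = ∞`) it is `n` itself. -/
def sylCard (p n : ℕ) : ℕ := if p = 0 then n else p ^ (n.factorization p)

/-- The multiplicative set `ℤ ∖ (p)` (for `p` prime), resp. the units of `ℤ` (for `p = 0`,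
representing `p = ∞`), so that `Localization (locMon p hp)` is `ℤ_(p)`, resp. `ℤ`. -/
def locMon (p : ℕ) (hp : p = 0 ∨ p.Prime) : Submonoid ℤ where
  carrier := {k | if p = 0 then IsUnit k else ¬ (p : ℤ) ∣ k}
  one_mem' := by
    rcases hp with h | h
    · simp [h]
    · simp only [Set.mem_setOf_eq, if_neg h.ne_zero]
      intro hd
      exact h.one_lt.ne' (by exact_mod_cast Int.eq_one_of_dvd_one (by positivity) hd)
  mul_mem' := by
    intro a b ha hb
    rcases hp with h | h
    · simp only [Set.mem_setOf_eq, if_pos h] at *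
      exact ha.mul hb
    · simp only [Set.mem_setOf_eq, if_neg h.ne_zero] at *
      intro hd
      rcases ((Nat.prime_iff_prime_int.mp h).dvd_mul.mp hd) with h1 | h1
      · exact ha h1
      · exact hb h1

/-- `ℤ_(p)` (with `ℤ_(0)` interpreted as `ℤ_(∞) = ℤ`). -/
abbrev Zp (p : ℕ) (hp : p = 0 ∨ p.Prime) := Localization (locMon p hp)



/-- The map `α_H^{(p)}`. -/
def alphaL {A : Type*} [AddCommMonoid A] [Finite L] (R : RepsL F H) (x : ↥R.R → A) :
    ↥R.R → A :=
  fun u => ∑ᶠ (s : L) (_ : s ∈ F.S u.1.1 ∧ u.1.2 ≤ s), coordAtL R.R H x (u.1.1, s)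

/-- The map `β_H^{(p)}`, defined via the Möbius functions of the posets `L_U`. -/
def betaL {A : Type*} [AddCommGroup A] [Finite L] (R : RepsL F H) (x : ↥R.R → A) :
    ↥R.R → A :=
  fun u => ∑ᶠ (s : L) (hs : s ∈ F.S u.1.1 ∧ u.1.2 ≤ s),
    mob (⟨u.1.2, (R.subset u.1 u.2).2⟩ : ↥(F.S u.1.1)) ⟨s, hs.1⟩ •
      coordAtL R.R H x (u.1.1, s)

variable (p : ℕ) (hp : p = 0 ∨ p.Prime)

/-- `Obs(H, M_L)_(p)`. -/
abbrev ObsL (R : RepsL F H) :=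
  ∀ u : ↥R.R, Zp p hp ⧸ Ideal.span {(sylCard p (WCardL H u.1) : Zp p hp)}

/-- The Cauchy–Frobenius map `ψ̃_H^{(p)}`; `P u` is the choice of the subgroup of
`N_H(U,t)` containing `U` with `(P u)/U` the Sylow `p`-subgroup `W_H(U,t)_p`. -/
def psiTL (R : RepsL F H) (P : ↥R.R → Subgroup G) (x : ↥R.R → Zp p hp) : ObsL F p hp R :=
  fun u => Ideal.Quotient.mk _ (∑ᶠ q : ↥(P u) ⧸ (u.1.1.subgroupOf (P u)),
    ∑ᶠ (s : L) (_ : s ∈ F.S (cyc ((Quotient.out q : ↥(P u)) : G) u.1.1) ∧ u.1.2 ≤ s),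
      coordAtL R.R H x (cyc ((Quotient.out q : ↥(P u)) : G) u.1.1, s))

/-- The map `β̃_H^{(p)}`. -/
def betaTL [Nonempty L] (R : RepsL F H) (P : ↥R.R → Subgroup G) (x : ↥R.R → Zp p hp) :
    ObsL F p hp R :=
  fun u => Ideal.Quotient.mk _ (∑ᶠ q : ↥(P u) ⧸ (u.1.1.subgroupOf (P u)),
    coordAtL R.R H x (cyc ((Quotient.out q : ↥(P u)) : G) u.1.1,
      leastGE F (cyc ((Quotient.out q : ↥(P u)) : G) u.1.1) u.1.2))

/-- `φ_H^{(p)}` with `ℤ_(p)`-coefficients. -/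
def phiLp (R : RepsL F H) (f : ↥R.R → Zp p hp) : ↥R.R → Zp p hp :=
  fun u => ∑ᶠ k : ↥R.R, f k * (invCountEq F H k.1 u.1 : Zp p hp)

/-- The pair `(K ∩ ʰU, res(s ∧ ʰt))` appearing in the product formula. -/
def prodPairL (h : G) (x y : Subgroup G × L) : Subgroup G × L :=
  (x.1 ⊓ conjS h y.1, (x.2 ⊓ h • y.2) ⊓ F.top (x.1 ⊓ conjS h y.1))
/-- The sublattice `L_K`, viewed as a monoid under meet, with identity `sup L_K`. -/
instance latticeMonoid (K : Subgroup G) : Monoid ↥(F.S K) where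
  mul a b := ⟨a.1 ⊓ b.1, F.inf_mem K a.2 b.2⟩
  one := ⟨F.top K, F.top_mem K⟩
  mul_assoc a b c := Subtype.ext (inf_assoc a.1 b.1 c.1)
  one_mul a := Subtype.ext (inf_eq_right.mpr (F.le_top K a.1 a.2))
  mul_one a := Subtype.ext (inf_eq_left.mpr (F.le_top K a.1 a.2))

/-- The conjugation map `con_H^g : L_H → L_{ᵍH}`, `s ↦ ᵍs`. -/
def conMap (g : G) (K : Subgroup G) (a : ↥(F.S K)) : ↥(F.S (conjS g K)) :=
  ⟨g • a.1, by rw [F.conj_eq g K]; exact ⟨a.1, a.2, rfl⟩⟩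

/-- The restriction map `res_K^H : L_H → L_K`, `s ↦ s ∧ sup L_K`. -/
def resMap {K K' : Subgroup G} (h : K ≤ K') (a : ↥(F.S K')) : ↥(F.S K) :=
  ⟨a.1 ⊓ F.top K, F.res_mem h a.1 a.2⟩

include F in
theorem smul_inf' (g : G) (a b : L) : g • (a ⊓ b) = g • a ⊓ g • b := by
  apply le_antisymm
  · exact le_inf (F.smul_le g _ _ inf_le_left) (F.smul_le g _ _ inf_le_right)
  · have h : g⁻¹ • (g • a ⊓ g • b) ≤ a ⊓ b := by
      apply le_inf
      · have := F.smul_le g⁻¹ _ _ (inf_le_left (a := g • a) (b := g • b))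
        rwa [inv_smul_smul] at this
      · have := F.smul_le g⁻¹ _ _ (inf_le_right (a := g • a) (b := g • b))
        rwa [inv_smul_smul] at this
    have := F.smul_le g _ _ h
    rwa [smul_inv_smul] at this

include F in
theorem top_conj (g : G) (K : Subgroup G) : F.top (conjS g K) = g • F.top K := by
  apply le_antisymm
  · have h := F.top_mem (conjS g K)
    rw [F.conj_eq g K] at h
    obtain ⟨s, hs, hEq⟩ := h
    rw [← hEq]
    exact F.smul_le g _ _ (F.le_top K s hs)
  · apply F.le_top
    rw [F.conj_eq g K]
    exact ⟨F.top K, F.top_mem K, rfl⟩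

theorem conjS_self {h : G} {K : Subgroup G} (hh : h ∈ K) : conjS h K = K := by
  ext x
  rw [mem_conjS]
  constructor
  · intro hx
    have := K.mul_mem (K.mul_mem hh hx) (K.inv_mem hh)
    simpa [mul_assoc] using this
  · intro hx
    exact K.mul_mem (K.mul_mem (K.inv_mem hh) hx) hh

include F in
theorem sigma_ext {K K' : Subgroup G} (h : K = K') {a : ↥(F.S K)} {b : ↥(F.S K')}
    (hv : (a : L) = (b : L)) :
    (⟨K, a⟩ : Σ K : Subgroup G, ↥(F.S K)) = ⟨K', b⟩ := by
  subst h
  exact congrArg _ (Subtype.ext hv)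

/-- Given a family of nonempty sublattices `L_H` of a finite `G`-lattice
`L` satisfying conditions (1)–(4), the assignments `M_L(H) = L_H` (a monoid under meet),
`con_H^g(s) = ᵍs` and `res_K^H(s) = s ∧ sup L_K` define a monoid functor for `G`:
the conjugation and restriction maps are monoid homomorphisms, and the axioms (M.1),
(M.2), (M.3) of a monoid functor hold. -/
theorem lattice_monoid_functor :
    -- the conjugation maps are monoid homomorphisms
    (∀ (g : G) (K : Subgroup G) (a b : ↥(F.S K)),
        conMap F g K (a * b) = conMap F g K a * conMap F g K b) ∧
    (∀ (g : G) (K : Subgroup G), conMap F g K 1 = 1) ∧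
    -- the restriction maps are monoid homomorphisms
    (∀ (K K' : Subgroup G) (h : K ≤ K') (a b : ↥(F.S K')),
        resMap F h (a * b) = resMap F h a * resMap F h b) ∧
    (∀ (K K' : Subgroup G) (h : K ≤ K'), resMap F h (1 : ↥(F.S K')) = 1) ∧
    -- (M.1):  con_{ʳH}^g ∘ con_H^r = con_H^{gr}  and  con_H^h = id for h ∈ H
    (∀ (g r : G) (K : Subgroup G) (a : ↥(F.S K)),
        (⟨conjS g (conjS r K), conMap F g (conjS r K) (conMap F r K a)⟩ :
            Σ K : Subgroup G, ↥(F.S K))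
          = ⟨conjS (g * r) K, conMap F (g * r) K a⟩) ∧
    (∀ (K : Subgroup G) (h : G), h ∈ K → ∀ a : ↥(F.S K),
        (⟨conjS h K, conMap F h K a⟩ : Σ K : Subgroup G, ↥(F.S K)) = ⟨K, a⟩) ∧
    -- (M.2):  res_L^K ∘ res_K^H = res_L^H  and  res_H^H = id
    (∀ (K₀ K K' : Subgroup G) (h1 : K₀ ≤ K) (h2 : K ≤ K') (a : ↥(F.S K')),
        resMap F h1 (resMap F h2 a) = resMap F (h1.trans h2) a) ∧
    (∀ (K : Subgroup G) (a : ↥(F.S K)), resMap F le_rfl a = a) ∧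
    -- (M.3):  con_K^g ∘ res_K^H = res_{ᵍK}^{ᵍH} ∘ con_H^g
    (∀ (g : G) (K K' : Subgroup G) (h : K ≤ K') (a : ↥(F.S K')),
        conMap F g K (resMap F h a) = resMap F (conjS_mono g h) (conMap F g K' a)) := by
  refine ⟨?_, ?_, ?_, ?_, ?_, ?_, ?_, ?_, ?_⟩
  · intro g K a b
    apply Subtype.ext
    show g • ((a : L) ⊓ b) = g • (a : L) ⊓ g • (b : L)
    exact smul_inf' F g _ _
  · intro g K
    apply Subtype.ext
    show g • F.top K = F.top (conjS g K)
    exact (top_conj F g K).symm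
  · intro K K' h a b
    apply Subtype.ext
    show ((a : L) ⊓ b) ⊓ F.top K = ((a : L) ⊓ F.top K) ⊓ ((b : L) ⊓ F.top K)
    rw [inf_inf_distrib_right]
  · intro K K' h
    apply Subtype.ext
    show F.top K' ⊓ F.top K = F.top K
    exact inf_eq_right.mpr (F.top_mono h)
  · intro g r K a
    exact sigma_ext F (conjS_mul g r K) (by show g • r • (a : L) = (g * r) • (a : L); rw [mul_smul])
  · intro K h hh a
    exact sigma_ext F (conjS_self hh) (F.invariant K h hh a a.2)
  · intro K₀ K K' h1 h2 a
    apply Subtype.ext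
    show ((a : L) ⊓ F.top K) ⊓ F.top K₀ = (a : L) ⊓ F.top K₀
    rw [inf_assoc, inf_eq_right.mpr (F.top_mono h1)]
  · intro K a
    exact Subtype.ext (inf_eq_left.mpr (F.le_top K a a.2))
  · intro g K K' h a
    apply Subtype.ext
    show g • ((a : L) ⊓ F.top K) = (g • (a : L)) ⊓ F.top (conjS g K)
    rw [smul_inf' F, top_conj F]

end
end LB
end

section
/- Let G be a finite group, L a finite G-lattice with a family of nonempty sublattices L_H as in the lattice Burnside ring setting, and H ≤ G. The Z_(p)-module homomorphism ψ̃_H^{(p)} : Ω̃(H,M_L)_(p) → Obs(H,M_L)_(p) sending (x_{(K,s)})_{(K,s)∈R(H,M_L)} to (Σ_{rU ∈ W_H(U,t)_p} Σ_{s ∈ L_{⟨r⟩U}, s ≥ t} x_{(⟨r⟩U,s)} mod |W_H(U,t)_p|)_{(U,t)∈R(H,M_L)} is surjective. -/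
set_option linter.unusedSectionVars false
set_option linter.unusedVariables false

open scoped Classical

namespace LB
noncomputable section

variable {G : Type*} [Group G]

variable {L : Type*} [Lattice L] [MulAction G L]

variable (F : SubLatticeFamily G L)

variable {H : Subgroup G}

variable (p : ℕ) (hp : p = 0 ∨ p.Prime)

/-! ### Auxiliary development for the surjectivity of `ψ̃` -/

theorem smul_le_iff' (F' : SubLatticeFamily G L) (g : G) {x y : L} :
    g • x ≤ g • y ↔ x ≤ y :=
  ⟨fun h => by simpa using F'.smul_le g⁻¹ _ _ h, F'.smul_le g x y⟩

/-- The measure used in the triangularity argument. -/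
def muP (z : Subgroup G × L) : ℕ :=
  Nat.card z.1 * (Nat.card L + 1) + Nat.card {x : L // x ≤ z.2}

theorem muP_dotL (F' : SubLatticeFamily G L) (g : G) (z : Subgroup G × L) :
    muP (dotL g z) = muP z := by
  unfold muP dotL
  congr 1
  · congr 1
    exact (Nat.card_congr (MulEquiv.subgroupMap (MulAut.conj g) z.1).toEquiv).symm
  · exact (Nat.card_congr ((Equiv.subtypeEquiv (MulAction.toPerm g)
      (fun x => (smul_le_iff' F' g).symm)) :
        {x : L // x ≤ z.2} ≃ {x : L // x ≤ g • z.2})).symm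

theorem muP_lt_bound [Finite G] [Finite L] (z : Subgroup G × L) :
    muP z < (Nat.card G + 1) * (Nat.card L + 1) := by
  have h1 : Nat.card z.1 ≤ Nat.card G :=
    Nat.card_le_card_of_injective _ Subtype.val_injective
  have h2 : Nat.card {x : L // x ≤ z.2} ≤ Nat.card L :=
    Nat.card_le_card_of_injective _ Subtype.val_injective
  calc muP z = Nat.card z.1 * (Nat.card L + 1) + Nat.card {x : L // x ≤ z.2} := rfl
    _ ≤ Nat.card G * (Nat.card L + 1) + Nat.card L :=
        Nat.add_le_add (Nat.mul_le_mul_right _ h1) h2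
    _ < (Nat.card G + 1) * (Nat.card L + 1) := by rw [add_mul, one_mul]; omega

/-- The representative of the orbit of a pair. -/
def repOf (R : RepsL F H) (z : Subgroup G × L) : Subgroup G × L :=
  if h : ∃ y, y ∈ R.R ∧ ∃ g ∈ H, dotL g z = y then h.choose else z

theorem repOf_spec (R : RepsL F H) {z : Subgroup G × L} (hz : memS F H z) :
    repOf F R z ∈ R.R ∧ ∃ g ∈ H, dotL g z = repOf F R z := by
  have h : ∃ y, y ∈ R.R ∧ ∃ g ∈ H, dotL g z = y := (R.complete z hz).exists
  rw [repOf, dif_pos h]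
  exact h.choose_spec

theorem repOf_unique (R : RepsL F H) {z k : Subgroup G × L} (hz : memS F H z)
    (hk : k ∈ R.R) (hor : ∃ g ∈ H, dotL g z = k) : k = repOf F R z := by
  obtain ⟨h1, h2⟩ := repOf_spec F R hz
  exact (R.complete z hz).unique ⟨hk, hor⟩ ⟨h1, h2⟩

theorem repOf_self (R : RepsL F H) (u : ↥R.R) :
    repOf F R (u : Subgroup G × L) = u :=
  (repOf_unique F R (R.subset u u.2) u.2 ⟨1, H.one_mem, dotL_one _⟩).symm

theorem muP_repOf (R : RepsL F H) {z : Subgroup G × L} (hz : memS F H z) :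
    muP (repOf F R z) = muP z := by
  obtain ⟨-, g, -, hg⟩ := repOf_spec F R hz
  rw [← hg, muP_dotL F]

theorem coordAtL_eq_rep {A : Type*} [AddCommMonoid A] (R : RepsL F H) {z : Subgroup G × L}
    (hz : memS F H z) (x : ↥R.R → A) (k : ↥R.R) (hk : (k : Subgroup G × L) = repOf F R z) :
    coordAtL R.R H x z = x k := by
  rw [coordAtL, finsum_eq_single _ k]
  · rw [finsum_eq_if, if_pos (by rw [hk]; exact (repOf_spec F R hz).2)]
  · intro j hj
    rw [finsum_eq_if, if_neg]
    intro hor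
    exact hj (Subtype.ext (by rw [hk]; exact repOf_unique F R hz j.2 hor))

theorem mem_NL {g : G} {z : Subgroup G × L} : g ∈ NL H z ↔ g ∈ H ∧ dotL g z = z :=
  Iff.rfl

theorem cyc_eq_self {r : G} {U : Subgroup G} (hr : r ∈ U) : cyc r U = U :=
  le_antisymm (sup_le ((Subgroup.closure_le _).2 (Set.singleton_subset_iff.2 hr)) le_rfl)
    le_sup_right

theorem cyc_le {r : G} {U K : Subgroup G} (hr : r ∈ K) (hU : U ≤ K) : cyc r U ≤ K :=
  sup_le ((Subgroup.closure_le _).2 (Set.singleton_subset_iff.2 hr)) hU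

theorem muP_lt_key [Finite G] [Finite L] (R : RepsL F H) (u : ↥R.R) {r : G} {s : L}
    (hs : s ∈ F.S (cyc r u.1.1)) (hts : u.1.2 ≤ s)
    (hnd : ¬(r ∈ u.1.1 ∧ s = u.1.2)) :
    muP (u : Subgroup G × L) < muP (cyc r u.1.1, s) := by
  have hB : Nat.card {x : L // x ≤ u.1.2} < Nat.card L + 1 :=
    Nat.lt_succ_of_le (Nat.card_le_card_of_injective _ Subtype.val_injective)
  by_cases hrU : r ∈ u.1.1
  · have hcyc : cyc r u.1.1 = u.1.1 := cyc_eq_self hrU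
    have hst : u.1.2 < s := lt_of_le_of_ne hts (fun h => hnd ⟨hrU, h.symm⟩)
    have hsub : ({x : L | x ≤ u.1.2} : Set L) ⊂ {x : L | x ≤ s} := by
      constructor
      · intro x hx
        exact le_trans hx hst.le
      · intro hsub2
        exact absurd (hsub2 (le_refl s)) (fun h => absurd (le_antisymm hst.le h) hst.ne)
    have hf : Nat.card {x : L // x ≤ u.1.2} < Nat.card {x : L // x ≤ s} := by
      exact Set.ncard_lt_ncard hsub (Set.toFinite _)
    show Nat.card u.1.1 * (Nat.card L + 1) + Nat.card {x : L // x ≤ u.1.2} <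
      Nat.card (cyc r u.1.1) * (Nat.card L + 1) + Nat.card {x : L // x ≤ s}
    rw [hcyc]
    omega
  · have hrc : r ∈ cyc r u.1.1 :=
      (le_sup_left : Subgroup.closure {r} ≤ cyc r u.1.1)
        (Subgroup.subset_closure (Set.mem_singleton r))
    have hlt : u.1.1 < cyc r u.1.1 :=
      lt_of_le_of_ne le_sup_right (fun h => hrU (by rw [h]; exact hrc))
    have hcard : Nat.card u.1.1 < Nat.card (cyc r u.1.1) := by
      exact Set.ncard_lt_ncard (SetLike.coe_ssubset_coe.mpr hlt) (Set.toFinite _)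
    calc muP (u : Subgroup G × L)
        = Nat.card u.1.1 * (Nat.card L + 1) + Nat.card {x : L // x ≤ u.1.2} := rfl
      _ < Nat.card u.1.1 * (Nat.card L + 1) + (Nat.card L + 1) := by omega
      _ = (Nat.card u.1.1 + 1) * (Nat.card L + 1) := by ring
      _ ≤ Nat.card (cyc r u.1.1) * (Nat.card L + 1) := Nat.mul_le_mul_right _ hcard
      _ ≤ muP (cyc r u.1.1, s) := Nat.le_add_right _ _

/-- The "strictly triangular" part of the Cauchy–Frobenius sum. -/
def Emap (R : RepsL F H) (P : ↥R.R → Subgroup G) {A : Type*} [AddCommMonoid A]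
    (x : ↥R.R → A) : ↥R.R → A :=
  fun u => ∑ᶠ q : ↥(P u) ⧸ (u.1.1.subgroupOf (P u)),
    ∑ᶠ (s : L) (_ : (s ∈ F.S (cyc ((Quotient.out q : ↥(P u)) : G) u.1.1) ∧ u.1.2 ≤ s) ∧
      ¬(((Quotient.out q : ↥(P u)) : G) ∈ u.1.1 ∧ s = u.1.2)),
      coordAtL R.R H x (cyc ((Quotient.out q : ↥(P u)) : G) u.1.1, s)

theorem coordAtL_add' [Finite G] [Finite L] {A : Type*} [AddCommMonoid A]
    (ι : Set (Subgroup G × L)) (x y : ↥ι → A) (z : Subgroup G × L) :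
    coordAtL ι H (x + y) z = coordAtL ι H x z + coordAtL ι H y z := by
  haveI : Finite (Subgroup G) := Finite.of_injective _ SetLike.coe_injective
  letI : Fintype ↥ι := Fintype.ofFinite _
  unfold coordAtL
  rw [finsum_eq_sum_of_fintype, finsum_eq_sum_of_fintype, finsum_eq_sum_of_fintype,
    ← Finset.sum_add_distrib]
  refine Finset.sum_congr rfl fun k _ => ?_
  by_cases hc : ∃ h ∈ H, dotL h z = (k : Subgroup G × L)
  · simp [finsum_eq_if, hc]
  · simp [finsum_eq_if, hc]

/-- `Emap` as an additive homomorphism. -/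
def EmapHom [Finite G] [Finite L] (R : RepsL F H) (P : ↥R.R → Subgroup G) {A : Type*}
    [AddCommGroup A] : (↥R.R → A) →+ (↥R.R → A) :=
  AddMonoidHom.mk' (Emap F R P) (by
    intro x y
    funext u
    show Emap F R P (x + y) u = Emap F R P x u + Emap F R P y u
    unfold Emap
    letI : Fintype (↥(P u) ⧸ (u.1.1.subgroupOf (P u))) := Fintype.ofFinite _
    letI : Fintype L := Fintype.ofFinite _
    rw [finsum_eq_sum_of_fintype, finsum_eq_sum_of_fintype, finsum_eq_sum_of_fintype,
      ← Finset.sum_add_distrib]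
    refine Finset.sum_congr rfl fun q _ => ?_
    rw [finsum_eq_sum_of_fintype, finsum_eq_sum_of_fintype, finsum_eq_sum_of_fintype,
      ← Finset.sum_add_distrib]
    refine Finset.sum_congr rfl fun s _ => ?_
    simp only [finsum_eq_if]
    split_ifs with hc
    · exact coordAtL_add' R.R x y _
    · simp)

theorem Emap_eq_zero [Finite G] [Finite L] (R : RepsL F H) (P : ↥R.R → Subgroup G)
    {A : Type*} [AddCommMonoid A] (x : ↥R.R → A) (u : ↥R.R) (hPu : P u ≤ NL H u.1)
    (hx : ∀ v : ↥R.R, muP (u : Subgroup G × L) < muP (v : Subgroup G × L) → x v = 0) :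
    Emap F R P x u = 0 := by
  unfold Emap
  apply finsum_eq_zero_of_forall_eq_zero
  intro q
  apply finsum_eq_zero_of_forall_eq_zero
  intro s
  rw [finsum_eq_if]
  split_ifs with hc
  · obtain ⟨⟨hs, hts⟩, hnd⟩ := hc
    have hrH : ((Quotient.out q : ↥(P u)) : G) ∈ H :=
      (mem_NL.1 (hPu (Quotient.out q : ↥(P u)).2)).1
    have hmemS : memS F H (cyc ((Quotient.out q : ↥(P u)) : G) u.1.1, s) :=
      ⟨cyc_le hrH (R.subset u u.2).1, hs⟩
    rw [coordAtL_eq_rep F R hmemS x ⟨repOf F R _, (repOf_spec F R hmemS).1⟩ rfl]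
    apply hx
    show muP (u : Subgroup G × L) < muP (repOf F R _)
    rw [muP_repOf F R hmemS]
    exact muP_lt_key F R u hs hts hnd
  · rfl

theorem psiTL_eq [Finite G] [Finite L] (R : RepsL F H) (P : ↥R.R → Subgroup G)
    (x : ↥R.R → Zp p hp) (u : ↥R.R) (hPu : P u ≤ NL H u.1) :
    psiTL F p hp R P x u =
      Ideal.Quotient.mk (Ideal.span {(sylCard p (WCardL H u.1) : Zp p hp)})
        (x u + Emap F R P x u) := by
  unfold psiTL
  apply congrArg
  letI : Fintype (↥(P u) ⧸ (u.1.1.subgroupOf (P u))) := Fintype.ofFinite _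
  letI : Fintype L := Fintype.ofFinite _
  unfold Emap
  simp only [finsum_eq_sum_of_fintype, finsum_eq_if]
  have split :
      (∑ q : ↥(P u) ⧸ (u.1.1.subgroupOf (P u)), ∑ s : L,
        if (s ∈ F.S (cyc ((Quotient.out q : ↥(P u)) : G) u.1.1) ∧ u.1.2 ≤ s) then
          coordAtL R.R H x (cyc ((Quotient.out q : ↥(P u)) : G) u.1.1, s) else 0) =
      (∑ q : ↥(P u) ⧸ (u.1.1.subgroupOf (P u)), ∑ s : L,
        if ((s ∈ F.S (cyc ((Quotient.out q : ↥(P u)) : G) u.1.1) ∧ u.1.2 ≤ s) ∧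
            (((Quotient.out q : ↥(P u)) : G) ∈ u.1.1 ∧ s = u.1.2)) then
          coordAtL R.R H x (cyc ((Quotient.out q : ↥(P u)) : G) u.1.1, s) else 0) +
      (∑ q : ↥(P u) ⧸ (u.1.1.subgroupOf (P u)), ∑ s : L,
        if ((s ∈ F.S (cyc ((Quotient.out q : ↥(P u)) : G) u.1.1) ∧ u.1.2 ≤ s) ∧
            ¬(((Quotient.out q : ↥(P u)) : G) ∈ u.1.1 ∧ s = u.1.2)) then
          coordAtL R.R H x (cyc ((Quotient.out q : ↥(P u)) : G) u.1.1, s) else 0) := by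
    rw [← Finset.sum_add_distrib]
    refine Finset.sum_congr rfl fun q _ => ?_
    rw [← Finset.sum_add_distrib]
    refine Finset.sum_congr rfl fun s _ => ?_
    by_cases h1 : (s ∈ F.S (cyc ((Quotient.out q : ↥(P u)) : G) u.1.1) ∧ u.1.2 ≤ s) <;>
      by_cases h2 : (((Quotient.out q : ↥(P u)) : G) ∈ u.1.1 ∧ s = u.1.2) <;>
      simp [h1, h2]
  rw [split]
  congr 1
  -- the diagonal part equals `x u`
  rw [Finset.sum_eq_single (QuotientGroup.mk (1 : ↥(P u)))]
  · set q₀ : ↥(P u) ⧸ (u.1.1.subgroupOf (P u)) := QuotientGroup.mk (1 : ↥(P u)) with hq₀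
    have hr0 : ((Quotient.out q₀ : ↥(P u)) : G) ∈ u.1.1 := by
      have h1 : (QuotientGroup.mk (Quotient.out q₀) :
          ↥(P u) ⧸ (u.1.1.subgroupOf (P u))) = QuotientGroup.mk (1 : ↥(P u)) := by
        rw [QuotientGroup.out_eq']
      have h2 := QuotientGroup.eq.mp h1
      rw [mul_one] at h2
      exact Subgroup.mem_subgroupOf.1 ((u.1.1.subgroupOf (P u)).inv_mem_iff.1 h2)
    rw [Finset.sum_eq_single u.1.2]
    · have hcyc : cyc ((Quotient.out q₀ : ↥(P u)) : G) u.1.1 = u.1.1 := cyc_eq_self hr0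
      rw [if_pos ⟨⟨by rw [hcyc]; exact (R.subset u u.2).2, le_rfl⟩, hr0, rfl⟩, hcyc]
      exact coordAtL_eq_rep F R (R.subset u u.2) x u (repOf_self F R u).symm
    · intro s _ hs
      rw [if_neg]
      rintro ⟨-, -, rfl⟩
      exact hs rfl
    · intro h
      exact absurd (Finset.mem_univ _) h
  · intro q _ hq
    apply Finset.sum_eq_zero
    intro s _
    rw [if_neg]
    rintro ⟨-, hrU, -⟩
    apply hq
    have h1 : (QuotientGroup.mk (Quotient.out q) :
        ↥(P u) ⧸ (u.1.1.subgroupOf (P u))) = q := QuotientGroup.out_eq' q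
    rw [← h1]
    exact QuotientGroup.eq.mpr (by
      rw [mul_one]
      exact (u.1.1.subgroupOf (P u)).inv_mem (Subgroup.mem_subgroupOf.2 hrU))
  · intro h
    exact absurd (Finset.mem_univ _) h

theorem Emap_iterate_eq_zero [Finite G] [Finite L] (R : RepsL F H)
    (P : ↥R.R → Subgroup G) (hPm : ∀ u : ↥R.R, P u ≤ NL H u.1) {A : Type*}
    [AddCommMonoid A] (x : ↥R.R → A) (n : ℕ) (u : ↥R.R)
    (hn : (Nat.card G + 1) * (Nat.card L + 1) ≤ muP (u : Subgroup G × L) + n) :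
    (Emap F R P)^[n] x u = 0 := by
  induction n generalizing x u with
  | zero =>
    exact absurd hn (by simpa using (muP_lt_bound (u : Subgroup G × L)).not_ge)
  | succ n ih =>
    rw [Function.iterate_succ_apply']
    apply Emap_eq_zero F R P _ u (hPm u)
    intro v hv
    apply ih
    omega

theorem geom_solve [Finite G] [Finite L] (R : RepsL F H) (P : ↥R.R → Subgroup G)
    {A : Type*} [AddCommGroup A] (y : ↥R.R → A) (n : ℕ) :
    (∑ k ∈ Finset.range n, (-1 : ℤ) ^ k • (⇑(EmapHom F R P (A := A)))^[k] y) +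
      EmapHom F R P (∑ k ∈ Finset.range n, (-1 : ℤ) ^ k • (⇑(EmapHom F R P (A := A)))^[k] y) =
    y - (-1 : ℤ) ^ n • (⇑(EmapHom F R P (A := A)))^[n] y := by
  set E := EmapHom F R P (A := A) with hE
  induction n with
  | zero => simp
  | succ n ih =>
    rw [Finset.sum_range_succ, map_add, map_zsmul, Function.iterate_succ_apply',
      pow_succ, mul_neg_one, neg_zsmul, sub_neg_eq_add]
    set S := ∑ k ∈ Finset.range n, (-1 : ℤ) ^ k • (⇑E)^[k] y with hS
    set b := (⇑E)^[n] y with hb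
    set m := (-1 : ℤ) ^ n with hm
    calc S + m • b + (E S + m • E b)
        = (S + E S) + (m • b + m • E b) := by abel
      _ = (y - m • b) + (m • b + m • E b) := by rw [ih]
      _ = y + m • E b := by abel

/-- The Cauchy–Frobenius map
`ψ̃_H^{(p)} : Ω̃(H, M_L)_(p) → Obs(H, M_L)_(p)` is surjective.  Here `P u`, for
`u = (U,t) ∈ R(H, M_L)`, is the subgroup of `N_H(U,t)` containing `U` such that
`(P u)/U` is the Sylow `p`-subgroup `W_H(U,t)_p` of `W_H(U,t)` (all of `W_H(U,t)`
in case `p = ∞`, encoded as `p = 0`). -/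
theorem lattice_psi_surjective [Finite G] [Finite L] (R : RepsL F H)
    (P : ↥R.R → Subgroup G)
    (hP : ∀ u : ↥R.R, u.1.1 ≤ P u ∧ P u ≤ NL H u.1 ∧
      (u.1.1.subgroupOf (P u)).index = sylCard p (WCardL H u.1)) :
    Function.Surjective (psiTL F p hp R P) := by
  intro y
  have hlift : ∀ u : ↥R.R, ∃ z : Zp p hp,
      Ideal.Quotient.mk (Ideal.span {(sylCard p (WCardL H u.1) : Zp p hp)}) z = y u :=
    fun u => Ideal.Quotient.mk_surjective (y u)
  choose ylift hylift using hlift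
  have hzero : (⇑(EmapHom F R P (A := Zp p hp)))^[(Nat.card G + 1) * (Nat.card L + 1)]
      ylift = 0 := by
    funext u'
    exact Emap_iterate_eq_zero F R P (fun v => (hP v).2.1) ylift _ u' (Nat.le_add_left _ _)
  obtain ⟨x, hsolve⟩ : ∃ x : ↥R.R → Zp p hp, x + EmapHom F R P x = ylift := by
    have h := geom_solve F R P (A := Zp p hp) ylift ((Nat.card G + 1) * (Nat.card L + 1))
    rw [hzero] at h
    exact ⟨_, h.trans (sub_eq_self.mpr (zsmul_zero _))⟩
  refine ⟨x, funext fun u => ?_⟩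
  rw [psiTL_eq F p hp R P x u (hP u).2.1]
  have h2 : x u + Emap F R P x u = ylift u := congrFun hsolve u
  rw [h2, hylift]

end
end LB
end

section
/- Let G be a finite group and L a finite G-lattice with a family of nonempty sublattices L_H as in the lattice Burnside ring setting. Let ∼_p be the equivalence relation on S(G,M_L) generated by (⟨g⟩U, s_{(g,t)}) ∼_p (U,t) for (U,t) ∈ S(G,M_L) and gU ∈ W_G(U,t)_p, where s_{(g,t)} = inf{s ∈ L_{⟨g⟩U} : s ≥ t}. If (K,s) ∼_p (U,t), then O^p(K) is conjugate to O^p(U) in G. -/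
set_option linter.unusedSectionVars false
set_option linter.unusedVariables false

open scoped Classical

namespace LB
noncomputable section

variable {G : Type*} [Group G]

variable {L : Type*} [Lattice L] [MulAction G L]

variable (F : SubLatticeFamily G L)

variable {H : Subgroup G}

variable (p : ℕ) (hp : p = 0 ∨ p.Prime)

/-- The generating relation of `∼_p`:
`(⟨g⟩U, s_{(g,t)}) ∼ (U,t)` for `(U,t) ∈ S(G, M_L)` and `gU ∈ W_G(U,t)_p`
(membership of `gU` in a Sylow `p`-subgroup of `W_G(U,t)` being expressed by membership
of `g` in a subgroup `P` with `U ≤ P ≤ N_G(U,t)` and `|P/U| = |W_G(U,t)_p|`). -/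
def pRel [Nonempty L] (p : ℕ) : (Subgroup G × L) → (Subgroup G × L) → Prop := fun a b =>
  memS F ⊤ b ∧ ∃ g : G,
    (∃ P : Subgroup G, b.1 ≤ P ∧ P ≤ NL ⊤ b ∧
      (b.1.subgroupOf P).index = sylCard p (WCardL ⊤ b) ∧ g ∈ P) ∧
    a = (cyc g b.1, leastGE F (cyc g b.1) b.2)

/-- `O^p(K)` for a prime `p`: the smallest normal subgroup of `K` with `p`-group
quotient; for `p = 0` (representing `p = ∞`): the intersection of the derived series
of `K`. -/
def Ores (p : ℕ) (K : Subgroup G) : Subgroup G :=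
  if p = 0 then ⨅ n : ℕ, (derivedSeries ↥K n).map K.subtype
  else sInf {N' : Subgroup G | N' ≤ K ∧ (N'.subgroupOf K).Normal ∧
    ∃ n : ℕ, (N'.subgroupOf K).index = p ^ n}

/-! ### Auxiliary lemmas for Statement 16 -/

open scoped commutatorElement

theorem conjS_conj_mem' {k x : G} {N : Subgroup G} (hx : x ∈ N) : k * x * k⁻¹ ∈ conjS k N := by
  rw [mem_conjS]
  have h : k⁻¹ * (k * x * k⁻¹) * k = x := by group
  rwa [h]

theorem conj_mem_of_conjS_eq' {k : G} {U : Subgroup G} (h : conjS k U = U) {u : G}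
    (hu : u ∈ U) : k * u * k⁻¹ ∈ U := h ▸ conjS_conj_mem' hu

theorem conjS_inv_eq' {k : G} {U : Subgroup G} (h : conjS k U = U) : conjS k⁻¹ U = U := by
  conv_lhs => rw [← h]
  rw [conjS_mul, inv_mul_cancel, conjS_one]

theorem mem_normalizer_of_conjS_eq' {k : G} {U : Subgroup G} (h : conjS k U = U) :
    k ∈ Subgroup.normalizer (U : Set G) := by
  rw [Subgroup.mem_normalizer_iff]
  intro u
  constructor
  · exact fun hu => conj_mem_of_conjS_eq' h hu
  · intro hu
    have h2 := conj_mem_of_conjS_eq' (conjS_inv_eq' h) hu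
    have h3 : k⁻¹ * (k * u * k⁻¹) * k⁻¹⁻¹ = u := by group
    rwa [h3] at h2

theorem mem_cyc' {g : G} {U : Subgroup G} (hg : g ∈ Subgroup.normalizer (U : Set G)) {x : G} (hx : x ∈ cyc g U) :
    ∃ (n : ℤ) (u : G), u ∈ U ∧ x = g ^ n * u := by
  have hc : ∀ (n : ℤ) {u : G}, u ∈ U → (g ^ n) * u * (g ^ n)⁻¹ ∈ U := fun n u hu =>
    (Subgroup.mem_normalizer_iff.1 ((Subgroup.normalizer (U : Set G)).zpow_mem hg n) u).1 hu
  let T : Subgroup G :=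
    { carrier := {x | ∃ (n : ℤ) (u : G), u ∈ U ∧ x = g ^ n * u}
      one_mem' := ⟨0, 1, U.one_mem, by simp⟩
      mul_mem' := by
        rintro a b ⟨m, u, hu, rfl⟩ ⟨n, v, hv, rfl⟩
        refine ⟨m + n, (g ^ (-n)) * u * (g ^ (-n))⁻¹ * v, U.mul_mem (hc _ hu) hv, ?_⟩
        group
      inv_mem' := by
        rintro a ⟨n, u, hu, rfl⟩
        refine ⟨-n, g ^ n * u⁻¹ * (g ^ n)⁻¹, hc _ (U.inv_mem hu), ?_⟩
        group }
  have hT : cyc g U ≤ T := by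
    refine sup_le ?_ (fun u hu => ⟨0, u, hu, by simp⟩)
    rw [Subgroup.closure_le]
    rintro y rfl
    exact ⟨1, 1, U.one_mem, by simp⟩
  exact hT hx

theorem commutator_mem_of_cyc' {g : G} {U : Subgroup G} (hg : conjS g U = U) :
    ∀ a ∈ cyc g U, ∀ b ∈ cyc g U, ⁅a, b⁆ ∈ U := by
  have hgN := mem_normalizer_of_conjS_eq' hg
  have hc : ∀ (n : ℤ) {u : G}, u ∈ U → (g ^ n) * u * (g ^ n)⁻¹ ∈ U := fun n u hu =>
    (Subgroup.mem_normalizer_iff.1 ((Subgroup.normalizer (U : Set G)).zpow_mem hgN n) u).1 hu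
  intro a ha b hb
  obtain ⟨m, u, hu, rfl⟩ := mem_cyc' hgN ha
  obtain ⟨n, v, hv, rfl⟩ := mem_cyc' hgN hb
  have w1 : (g ^ (-n)) * u * (g ^ (-n))⁻¹ * v ∈ U := U.mul_mem (hc _ hu) hv
  have w2 : (g ^ (-m)) * v * (g ^ (-m))⁻¹ * u ∈ U := U.mul_mem (hc _ hv) hu
  have key : ⁅g ^ m * u, g ^ n * v⁆ =
      g ^ (m + n) * (((g ^ (-n)) * u * (g ^ (-n))⁻¹ * v) *
        ((g ^ (-m)) * v * (g ^ (-m))⁻¹ * u)⁻¹) * (g ^ (m + n))⁻¹ := by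
    rw [commutatorElement_def]; group
  rw [key]
  exact hc _ (U.mul_mem w1 (U.inv_mem w2))

/-- The iterated-commutator series of a subgroup, within the ambient group. -/
def Dser : ℕ → Subgroup G → Subgroup G
  | 0, H => H
  | n + 1, H => ⁅Dser n H, Dser n H⁆

theorem derivedSeries_map_eq' (K : Subgroup G) (n : ℕ) :
    (derivedSeries ↥K n).map K.subtype = Dser n K := by
  induction n with
  | zero =>
    rw [derivedSeries_zero, ← MonoidHom.range_eq_map, Subgroup.range_subtype]
    rfl
  | succ n ih => rw [derivedSeries_succ, Subgroup.map_commutator, ih]; rfl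

theorem Ores_zero_eq' (K : Subgroup G) : Ores 0 K = ⨅ n, Dser n K := by
  rw [Ores, if_pos rfl]
  exact iInf_congr (derivedSeries_map_eq' K)

theorem Dser_mono' (n : ℕ) {A B : Subgroup G} (h : A ≤ B) : Dser n A ≤ Dser n B := by
  induction n with
  | zero => exact h
  | succ n ih => exact Subgroup.commutator_mono ih ih

theorem Ores_zero_congr' {U K : Subgroup G} (hUK : U ≤ K)
    (hcomm : ∀ a ∈ K, ∀ b ∈ K, ⁅a, b⁆ ∈ U) : Ores 0 K = Ores 0 U := by
  rw [Ores_zero_eq', Ores_zero_eq']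
  have h1 : Dser 1 K ≤ U := Subgroup.commutator_le.2 hcomm
  have key : ∀ n, Dser (n + 1) K ≤ Dser n U := by
    intro n
    induction n with
    | zero => exact h1
    | succ n ih => exact Subgroup.commutator_mono ih ih
  exact le_antisymm (le_iInf fun n => (iInf_le _ (n + 1)).trans (key n))
    (le_iInf fun n => (iInf_le _ n).trans (Dser_mono' n hUK))

/-- The defining set for `Ores p K` (`p ≠ 0`). -/
def pSet (p : ℕ) (K : Subgroup G) : Set (Subgroup G) :=
  {N : Subgroup G | N ≤ K ∧ (N.subgroupOf K).Normal ∧ ∃ n : ℕ, (N.subgroupOf K).index = p ^ n}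

theorem Ores_eq_sInf' {p : ℕ} (hp : p ≠ 0) (K : Subgroup G) : Ores p K = sInf (pSet p K) := by
  rw [Ores, if_neg hp]; rfl

theorem normal_subgroupOf_of_conj_mem' {N K : Subgroup G}
    (h : ∀ k ∈ K, ∀ x ∈ N, k * x * k⁻¹ ∈ N) : (N.subgroupOf K).Normal := by
  constructor
  intro n hn k
  rw [Subgroup.mem_subgroupOf] at hn ⊢
  simpa using h k k.2 n hn

theorem conj_mem_of_normal_subgroupOf' {N K : Subgroup G} (hNK : N ≤ K)
    (hn : (N.subgroupOf K).Normal) {k x : G} (hk : k ∈ K) (hx : x ∈ N) :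
    k * x * k⁻¹ ∈ N := by
  have h := hn.conj_mem ⟨x, hNK hx⟩ (Subgroup.mem_subgroupOf.2 hx) ⟨k, hk⟩
  rw [Subgroup.mem_subgroupOf] at h
  simpa using h

theorem normal_inf' {Γ : Type*} [Group Γ] {A B : Subgroup Γ} (hA : A.Normal) (hB : B.Normal) :
    (A ⊓ B).Normal :=
  ⟨fun n hn g => ⟨hA.conj_mem n hn.1 g, hB.conj_mem n hn.2 g⟩⟩

theorem index_inf_dvd' {Γ : Type*} [Group Γ] (A B : Subgroup Γ) (hB : B.Normal) :
    (A ⊓ B).index ∣ A.index * B.index := by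
  haveI := hB
  have h1 : (A ⊓ B).relIndex A * A.index = (A ⊓ B).index :=
    Subgroup.relIndex_mul_index inf_le_left
  rw [Subgroup.inf_relIndex_left] at h1
  rw [← h1, mul_comm A.index B.index]
  exact mul_dvd_mul (Subgroup.relIndex_dvd_index_of_normal B A) dvd_rfl

theorem pSet_self' (p : ℕ) (K : Subgroup G) : K ∈ pSet p K := by
  refine ⟨le_rfl, ?_, 0, ?_⟩
  · rw [Subgroup.subgroupOf_self]; infer_instance
  · rw [Subgroup.subgroupOf_self, Subgroup.index_top, pow_zero]

theorem pSet_inf_mem' {p : ℕ} (hp : p.Prime) {K A B : Subgroup G}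
    (hA : A ∈ pSet p K) (hB : B ∈ pSet p K) : A ⊓ B ∈ pSet p K := by
  obtain ⟨hAK, hAn, a, ha⟩ := hA
  obtain ⟨hBK, hBn, b, hb⟩ := hB
  have hsub : (A ⊓ B).subgroupOf K = A.subgroupOf K ⊓ B.subgroupOf K :=
    Subgroup.comap_inf A B K.subtype
  refine ⟨inf_le_left.trans hAK, ?_, ?_⟩
  · rw [hsub]; exact normal_inf' hAn hBn
  · have hd : ((A ⊓ B).subgroupOf K).index ∣ p ^ (a + b) := by
      rw [hsub, pow_add, ← ha, ← hb]
      exact index_inf_dvd' _ _ hBn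
    obtain ⟨i, _, hi⟩ := (Nat.dvd_prime_pow hp).1 hd
    exact ⟨i, hi⟩

theorem sInf_mem_of_closed' [Finite G] {S : Set (Subgroup G)}
    (hne : S.Nonempty) (hcl : ∀ a ∈ S, ∀ b ∈ S, a ⊓ b ∈ S) : sInf S ∈ S := by
  haveI : Finite (Subgroup G) :=
    Finite.of_injective (fun H => (H : Set G)) SetLike.coe_injective
  obtain ⟨a, ha⟩ := hne
  obtain ⟨m, -, hmin⟩ := exists_minimal_le_of_wellFoundedLT (· ∈ S) a ha
  have hle : ∀ b ∈ S, m ≤ b := fun b hb =>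
    (hmin.2 (hcl m hmin.1 b hb) inf_le_left).trans inf_le_right
  have h : sInf S = m := le_antisymm (sInf_le hmin.1) (le_sInf hle)
  rw [h]; exact hmin.1

theorem subgroupOf_index_mul_card' [Finite G] {N U : Subgroup G} (h : N ≤ U) :
    (N.subgroupOf U).index * Nat.card N = Nat.card U := by
  have h1 := Subgroup.card_mul_index (N.subgroupOf U)
  rw [Nat.card_congr (Subgroup.subgroupOfEquivOfLe h).toEquiv] at h1
  rw [mul_comm]
  exact h1

theorem card_conjS' (k : G) (N : Subgroup G) : Nat.card (conjS k N) = Nat.card N := by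
  have hinj : Function.Injective ((MulAut.conj k).toMonoidHom : G →* G) :=
    (MulAut.conj k).injective
  exact (Nat.card_congr (Subgroup.equivMapOfInjective N _ hinj).toEquiv).symm

theorem pSet_conjS_mem' [Finite G] {p : ℕ} {U N : Subgroup G} {k : G}
    (hk : conjS k U = U) (hN : N ∈ pSet p U) : conjS k N ∈ pSet p U := by
  obtain ⟨hNU, hNn, n, hn⟩ := hN
  have hle : conjS k N ≤ U := hk ▸ conjS_mono k hNU
  refine ⟨hle, ?_, n, ?_⟩
  · refine normal_subgroupOf_of_conj_mem' fun u hu x hx => ?_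
    rw [mem_conjS] at hx ⊢
    have hu' : k⁻¹ * u * k ∈ U := by
      have := conj_mem_of_conjS_eq' (conjS_inv_eq' hk) hu
      rwa [inv_inv] at this
    have hm := conj_mem_of_normal_subgroupOf' hNU hNn hu' hx
    have heq : (k⁻¹ * u * k) * (k⁻¹ * x * k) * (k⁻¹ * u * k)⁻¹ = k⁻¹ * (u * x * u⁻¹) * k := by
      group
    rwa [heq] at hm
  · have h1 := subgroupOf_index_mul_card' hNU
    have h2 := subgroupOf_index_mul_card' hle
    rw [card_conjS'] at h2
    haveI : Nonempty (↥N) := ⟨1⟩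
    have hpos : 0 < Nat.card N := Nat.card_pos
    have heq : (N.subgroupOf U).index = ((conjS k N).subgroupOf U).index :=
      Nat.eq_of_mul_eq_mul_right hpos (h1.trans h2.symm)
    rw [← heq]
    exact hn

theorem Ores_prime_congr' [Finite G] {p : ℕ} (hp : p.Prime) {U K : Subgroup G}
    (hUK : U ≤ K) (hconj : ∀ k ∈ K, conjS k U = U)
    (hidx : ∃ n : ℕ, (U.subgroupOf K).index = p ^ n) : Ores p K = Ores p U := by
  have hp0 : p ≠ 0 := hp.ne_zero
  rw [Ores_eq_sInf' hp0, Ores_eq_sInf' hp0]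
  have hclK : ∀ a ∈ pSet p K, ∀ b ∈ pSet p K, a ⊓ b ∈ pSet p K :=
    fun a ha b hb => pSet_inf_mem' hp ha hb
  have hclU : ∀ a ∈ pSet p U, ∀ b ∈ pSet p U, a ⊓ b ∈ pSet p U :=
    fun a ha b hb => pSet_inf_mem' hp ha hb
  have hMK := sInf_mem_of_closed' ⟨K, pSet_self' p K⟩ hclK
  have hMU := sInf_mem_of_closed' ⟨U, pSet_self' p U⟩ hclU
  set MK := sInf (pSet p K) with hMKdef
  set MU := sInf (pSet p U) with hMUdef
  have hUnK : (U.subgroupOf K).Normal := normal_subgroupOf_of_conj_mem'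
    (fun k hk x hx => conj_mem_of_conjS_eq' (hconj k hk) hx)
  have hUmem : U ∈ pSet p K := ⟨hUK, hUnK, hidx⟩
  have hMKU : MK ≤ U := sInf_le hUmem
  have hMK_KU : MK ∈ pSet p U := by
    obtain ⟨hMKK, hMKn, n, hn⟩ := hMK
    refine ⟨hMKU, ?_, ?_⟩
    · exact normal_subgroupOf_of_conj_mem' fun u hu x hx =>
        conj_mem_of_normal_subgroupOf' hMKK hMKn (hUK hu) hx
    · have h1 : (MK.subgroupOf U).index * (U.subgroupOf K).index = (MK.subgroupOf K).index :=
        Subgroup.relIndex_mul_relIndex MK U K hMKU hUK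
      have hd : (MK.subgroupOf U).index ∣ p ^ n :=
        ⟨(U.subgroupOf K).index, by rw [← hn]; exact h1.symm⟩
      obtain ⟨i, _, hi⟩ := (Nat.dvd_prime_pow hp).1 hd
      exact ⟨i, hi⟩
  have h2 : MU ≤ MK := sInf_le hMK_KU
  have hleM : ∀ k ∈ K, conjS k MU ≤ MU := by
    intro k hk
    refine le_sInf fun N hN => ?_
    have h3 : conjS k⁻¹ N ∈ pSet p U := pSet_conjS_mem' (conjS_inv_eq' (hconj k hk)) hN
    have h4 : MU ≤ conjS k⁻¹ N := sInf_le h3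
    have h5 := conjS_mono k h4
    rwa [conjS_mul, mul_inv_cancel, conjS_one] at h5
  have hconjMU : ∀ k ∈ K, conjS k MU = MU := by
    intro k hk
    refine le_antisymm (hleM k hk) ?_
    have h6 := conjS_mono k (hleM k⁻¹ (K.inv_mem hk))
    rwa [conjS_mul, mul_inv_cancel, conjS_one] at h6
  have hMU_K : MU ∈ pSet p K := by
    obtain ⟨hMUU, hMUn, n, hn⟩ := hMU
    refine ⟨hMUU.trans hUK, ?_, ?_⟩
    · refine normal_subgroupOf_of_conj_mem' fun k hk x hx => ?_
      have h7 := conjS_conj_mem' (k := k) hx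
      rwa [hconjMU k hk] at h7
    · obtain ⟨m, hm⟩ := hidx
      have h1 : (MU.subgroupOf U).index * (U.subgroupOf K).index = (MU.subgroupOf K).index :=
        Subgroup.relIndex_mul_relIndex MU U K hMUU hUK
      exact ⟨n + m, by rw [← h1, hn, hm, pow_add]⟩
  exact le_antisymm (sInf_le hMU_K) h2

set_option maxHeartbeats 1000000 in
/-- If `(K,s) ∼_p (U,t)`, where `∼_p` is the equivalence relation on
`S(G, M_L)` generated by `(⟨g⟩U, s_{(g,t)}) ∼_p (U,t)` for `gU ∈ W_G(U,t)_p`, then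
`O^p(K)` is conjugate to `O^p(U)` in `G`. -/
theorem lattice_pRel_Ores_conj [Finite G] [Finite L] [Nonempty L]
    (K U : Subgroup G) (s t : L)
    (h : Relation.EqvGen (pRel F p) (K, s) (U, t)) :
    ∃ g : G, conjS g (Ores p U) = Ores p K := by
  refine ⟨1, ?_⟩
  rw [conjS_one]
  have key : ∀ a b : Subgroup G × L, pRel F p a b → Ores p b.1 = Ores p a.1 := by
    rintro a b ⟨hmem, g, ⟨P, hUP, hPN, hidx, hgP⟩, ha⟩
    subst ha
    have hconjP : ∀ k ∈ P, conjS k b.1 = b.1 := by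
      intro k hk
      have h2 : dotL k b = b := (hPN hk).2
      have h3 : (dotL k b).1 = b.1 := congrArg Prod.fst h2
      exact h3
    have hgN : conjS g b.1 = b.1 := hconjP g hgP
    have hKP : cyc g b.1 ≤ P := by
      refine sup_le ?_ hUP
      rw [Subgroup.closure_le]
      exact Set.singleton_subset_iff.2 hgP
    have hUK : b.1 ≤ cyc g b.1 := le_sup_right
    have hconjK : ∀ k ∈ cyc g b.1, conjS k b.1 = b.1 := fun k hk => hconjP k (hKP hk)
    rcases eq_or_ne p 0 with rfl | hp0
    · exact (Ores_zero_congr' hUK (commutator_mem_of_cyc' hgN)).symm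
    by_cases hpp : p.Prime
    · refine (Ores_prime_congr' hpp hUK hconjK ?_).symm
      have h1 : (b.1.subgroupOf (cyc g b.1)).index * ((cyc g b.1).subgroupOf P).index =
          (b.1.subgroupOf P).index :=
        Subgroup.relIndex_mul_relIndex b.1 (cyc g b.1) P hUK hKP
      have h2 : (b.1.subgroupOf P).index = p ^ ((WCardL ⊤ b).factorization p) := by
        rw [hidx, sylCard, if_neg hp0]
      have hd : (b.1.subgroupOf (cyc g b.1)).index ∣ p ^ ((WCardL ⊤ b).factorization p) :=
        ⟨((cyc g b.1).subgroupOf P).index, by rw [← h2]; exact h1.symm⟩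
      obtain ⟨i, _, hi⟩ := (Nat.dvd_prime_pow hpp).1 hd
      exact ⟨i, hi⟩
    · have h1 : (b.1.subgroupOf P).index = 1 := by
        rw [hidx, sylCard, if_neg hp0, Nat.factorization_eq_zero_of_not_prime _ hpp, pow_zero]
      have hPU : P ≤ b.1 := Subgroup.subgroupOf_eq_top.1 (Subgroup.index_eq_one.1 h1)
      have hKU : cyc g b.1 = b.1 := le_antisymm (hKP.trans hPU) hUK
      rw [show ((cyc g b.1, leastGE F (cyc g b.1) b.2) : Subgroup G × L).1 = cyc g b.1 from rfl,
        hKU]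
  have main : ∀ x y : Subgroup G × L, Relation.EqvGen (pRel F p) x y →
      Ores p y.1 = Ores p x.1 := by
    intro x y hxy
    induction hxy with
    | rel a b hab => exact key a b hab
    | refl a => rfl
    | symm a b _ ih => exact ih.symm
    | trans a b c _ _ ih1 ih2 => exact ih2.trans ih1
  exact main (K, s) (U, t) h

end
end LB
end
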